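/- Every countable linear order Y in which every non-greatest element has an immediate successor and every non-least element has an immediate predecessor admits an order embedding φ : Y → (0,1) ⊆ ℝ such that no point of φ(Y) is an accumulation point of φ(Y). -/
import Mathlib


open Filter

/-- Every countable sequential linear order admits an order embedding into the
open interval `(0,1) ⊆ ℝ` whose image has no point which is an accumulation
point of the image. -/
theorem exists_discrete_orderEmbedding_into_unitInterval
    {Y : Type*} [LinearOrder Y] [Countable Y]
    (hsucc : ∀ y : Y, ¬ IsMax y → ∃ z, y ⋖ z)
    (hpred : ∀ y : Y, ¬ IsMin y → ∃ z, z ⋖ y) :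
    ∃ φ : Y ↪o ℝ, (∀ y : Y, φ y ∈ Set.Ioo (0 : ℝ) 1) ∧
      ∀ y : Y, ¬ AccPt (φ y) (𝓟 (Set.range φ)) := by
  -- Embed Y into the dense order ↥(Set.Ioo (0:ℝ) 1)
  have : Nontrivial (Set.Ioo (0 : ℝ) 1) := by
    refine ⟨⟨⟨1/4, by norm_num, by norm_num⟩, ⟨1/2, by norm_num, by norm_num⟩, ?_⟩⟩
    simp [Subtype.ext_iff]
  obtain ⟨f⟩ : Nonempty (Y ↪o Set.Ioo (0 : ℝ) 1) := Order.embedding_from_countable_to_dense _ _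
  let φ : Y ↪o ℝ := f.trans (OrderEmbedding.subtype _)
  have hφ : ∀ y, φ y = (f y : ℝ) := fun _ => rfl
  refine ⟨φ, fun y => (f y).2, fun y hacc => ?_⟩
  -- Build a punctured neighborhood of φ y missing the range.
  obtain ⟨b, hyb, hb⟩ : ∃ b : ℝ, φ y < b ∧ ∀ u : Y, φ u < b → u ≤ y := by
    by_cases hmax : IsMax y
    · exact ⟨φ y + 1, by linarith, fun u _ => hmax.isTop u⟩
    · obtain ⟨z, hz⟩ := hsucc y hmax
      exact ⟨φ z, φ.strictMono hz.lt, fun u hu => by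
        by_contra h
        exact hz.2 (lt_of_not_ge h) (φ.lt_iff_lt.mp hu)⟩
  obtain ⟨a, hay, ha⟩ : ∃ a : ℝ, a < φ y ∧ ∀ u : Y, a < φ u → y ≤ u := by
    by_cases hmin : IsMin y
    · exact ⟨φ y - 1, by linarith, fun u _ => hmin.isBot u⟩
    · obtain ⟨w, hw⟩ := hpred y hmin
      exact ⟨φ w, φ.strictMono hw.lt, fun u hu => by
        by_contra h
        exact hw.2 (φ.lt_iff_lt.mp hu) (lt_of_not_ge h)⟩
  rw [accPt_iff_nhds] at hacc
  obtain ⟨x, ⟨hxU, hxR⟩, hxne⟩ := hacc (Set.Ioo a b) (Ioo_mem_nhds hay hyb)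
  obtain ⟨u, rfl⟩ := hxR
  exact hxne (congrArg φ (le_antisymm (hb u hxU.2) (ha u hxU.1)))
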